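/- If (S_1,…,S_m) is a counterexample with parameters (m,n,k) that is minimal in the lexicographic order on (m,n,k), then for every subset I ⊆ {1,…,m} with 2 ≤ |I| ≤ m−1, one has k − 1 − |⋂_{i∈I} S_i| ≥ Σ_{i∈I} (k − |S_i|). -/

import Mathlib

/-- `K = Frac(ℚ[α₁,…,αₙ])`, the field of rational functions in `n` indeterminates over `ℚ`. -/
noncomputable abbrev Kf (n : ℕ) : Type := FractionRing (MvPolynomial (Fin n) ℚ)

/-- For a set `S ⊆ {1,…,n}`, the polynomial `p_S(x) = ∏_{j ∈ S} (x - α_j)`. -/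
noncomputable def pS {n : ℕ} (S : Finset (Fin n)) : Polynomial (Kf n) :=
  ∏ j ∈ S, (Polynomial.X - Polynomial.C
    (algebraMap (MvPolynomial (Fin n) ℚ) (Kf n) (MvPolynomial.X j)))

/-- The GM-MDS condition: for every nonempty `I ⊆ [m]`,
`k - |⋂_{i∈I} S_i| ≥ ∑_{i∈I} (k - |S_i|)`. -/
def GMCond (m n k : ℕ) (S : Fin m → Finset (Fin n)) : Prop :=
  ∀ I : Finset (Fin m), ∀ hI : I.Nonempty,
    (k : ℤ) - ((I.inf' hI S).card : ℤ) ≥ ∑ i ∈ I, ((k : ℤ) - ((S i).card : ℤ))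

/-- A counterexample with parameters `(m, n, k)`: sets `S₁,…,S_m ⊆ [n]` with `m ≥ 2`,
`|S_i| ≤ k - 1`, `∑ |S_i| = (m-1)·k`, satisfying the GM-MDS condition, for which there
exist polynomials `q₁,…,q_m ∈ K[x]`, not all zero, with `deg q_i ≤ k-1-|S_i|` and
`∑ q_i · p_{S_i} = 0`. -/
def IsCounterexample (m n k : ℕ) (S : Fin m → Finset (Fin n)) : Prop :=
  2 ≤ m ∧ (∀ i, ((S i).card : ℤ) ≤ (k : ℤ) - 1) ∧
    (∑ i, (S i).card = (m - 1) * k) ∧ GMCond m n k S ∧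
    ∃ q : Fin m → Polynomial (Kf n),
      (∃ i, q i ≠ 0) ∧
      (∀ i, q i ≠ 0 → ((q i).natDegree : ℤ) ≤ (k : ℤ) - 1 - ((S i).card : ℤ)) ∧
      ∑ i, q i * pS (S i) = 0

/-- A minimal counterexample: one whose parameter triple `(m, n, k)` is lexicographically
least among the parameter triples of all counterexamples. -/
def IsMinimalCounterexample (m n k : ℕ) (S : Fin m → Finset (Fin n)) : Prop :=
  IsCounterexample m n k S ∧
    ∀ (m' n' k' : ℕ) (S' : Fin m' → Finset (Fin n')), IsCounterexample m' n' k' S' →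
      m < m' ∨ (m = m' ∧ (n < n' ∨ (n = n' ∧ k ≤ k')))

/-- `Q_ℓ = {t ∈ [m] : ℓ ∈ S_t}`. -/
def Q {m n : ℕ} (S : Fin m → Finset (Fin n)) (ℓ : Fin n) : Finset (Fin m) :=
  Finset.univ.filter (fun t => ℓ ∈ S t)

lemma pS_monic {n : ℕ} (S : Finset (Fin n)) : (pS S).Monic :=
  Polynomial.monic_prod_of_monic _ _ (fun j _ => Polynomial.monic_X_sub_C _)

lemma pS_ne_zero {n : ℕ} (S : Finset (Fin n)) : pS S ≠ 0 := (pS_monic S).ne_zero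

lemma pS_natDegree {n : ℕ} (S : Finset (Fin n)) : (pS S).natDegree = S.card := by
  unfold pS
  rw [Polynomial.natDegree_prod _ _ (fun j _ => Polynomial.X_sub_C_ne_zero _)]
  simp

lemma pS_sdiff {n : ℕ} {T S : Finset (Fin n)} (h : T ⊆ S) :
    pS S = pS T * pS (S \ T) := by
  rw [pS, pS, pS, ← Finset.prod_union Finset.disjoint_sdiff,
    Finset.union_sdiff_of_subset h]

lemma mem_inf'_finset {ι α : Type*} [DecidableEq α] {I : Finset ι} (hI : I.Nonempty)
    (f : ι → Finset α) (x : α) : x ∈ I.inf' hI f ↔ ∀ i ∈ I, x ∈ f i := by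
  rw [← Finset.singleton_subset_iff, ← Finset.le_iff_subset, Finset.le_inf'_iff]
  simp [Finset.singleton_subset_iff]

lemma sum_orderIsoOfFin {α M : Type*} [LinearOrder α] [AddCommMonoid M]
    (s : Finset α) (f : α → M) :
    ∑ j : Fin s.card, f (s.orderIsoOfFin rfl j) = ∑ i ∈ s, f i := by
  rw [← Finset.sum_coe_sort s f]
  exact Fintype.sum_equiv (s.orderIsoOfFin rfl).toEquiv _ _ (fun j => rfl)


/-- **Lemma 2 (i).** For a minimal counterexample, every `I ⊆ [m]` with
`2 ≤ |I| ≤ m - 1` satisfies `k - 1 - |⋂_{i∈I} S_i| ≥ ∑_{i∈I} (k - |S_i|)`. -/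
theorem minimal_counterexample_strict (m n k : ℕ) (S : Fin m → Finset (Fin n))
    (hmin : IsMinimalCounterexample m n k S) :
    ∀ I : Finset (Fin m), ∀ hI : I.Nonempty, 2 ≤ I.card → I.card ≤ m - 1 →
      (k : ℤ) - 1 - ((I.inf' hI S).card : ℤ) ≥ ∑ i ∈ I, ((k : ℤ) - ((S i).card : ℤ)) := by
  intro I hI hI2 hIm
  by_contra hcon
  push_neg at hcon
  obtain ⟨⟨hm2, hcard, hsum, hGM, q, ⟨i0, hq0⟩, hdeg, hrel⟩, hminlt⟩ := hmin
  set T := I.inf' hI S with hTdef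
  have hGMI := hGM I hI
  rw [← hTdef] at hGMI
  have heq : ∑ i ∈ I, ((k : ℤ) - ((S i).card : ℤ)) = (k : ℤ) - (T.card : ℤ) := by omega
  have hTsub : ∀ i ∈ I, T ⊆ S i := fun i hi => Finset.inf'_le S hi
  obtain ⟨i1, hi1⟩ := hI
  have hTk : T.card + 1 ≤ k := by
    have h1 := Finset.card_le_card (hTsub i1 hi1)
    have h2 := hcard i1
    omega
  -- the quotient polynomial
  set hp := ∑ i ∈ I, q i * pS (S i \ T) with hhp
  have hkeyI : pS T * hp = ∑ i ∈ I, q i * pS (S i) := by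
    rw [hhp, Finset.mul_sum]
    refine Finset.sum_congr rfl (fun i hi => ?_)
    rw [pS_sdiff (hTsub i hi)]; ring
  have hsplit : (∑ i ∈ Iᶜ, q i * pS (S i)) + pS T * hp = 0 := by
    rw [hkeyI, add_comm, Finset.sum_add_sum_compl, hrel]
  -- degree bound on hp
  have hdeghp : hp.natDegree ≤ k - 1 - T.card := by
    rw [hhp]
    refine Polynomial.natDegree_sum_le_of_forall_le _ _ (fun i hi => ?_)
    by_cases hqi : q i = 0
    · simp [hqi]
    · refine (Polynomial.natDegree_mul_le).trans ?_
      have h1 := hdeg i hqi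
      have h2 := hcard i
      have h3 := Finset.card_le_card (hTsub i hi)
      rw [pS_natDegree, Finset.card_sdiff_of_subset (hTsub i hi)]
      omega
  have hsumIcard : (∑ i ∈ I, ((S i).card : ℤ)) = (I.card : ℤ) * k - k + T.card := by
    have hds : (∑ i ∈ I, ((k : ℤ) - ((S i).card : ℤ)))
        = (I.card : ℤ) * k - ∑ i ∈ I, ((S i).card : ℤ) := by
      rw [Finset.sum_sub_distrib, Finset.sum_const, nsmul_eq_mul]
    linarith [heq, hds]
  by_cases hA : ∀ i, i ∉ I → q i = 0
  · -- Case A : all outside coefficients vanish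
    have hi0I : i0 ∈ I := by
      by_contra hi0
      exact hq0 (hA i0 hi0)
    have hp0 : hp = 0 := by
      have hz : (∑ i ∈ Iᶜ, q i * pS (S i)) = 0 :=
        Finset.sum_eq_zero (fun i hi => by rw [hA i (Finset.mem_compl.mp hi)]; ring)
      rw [hz, zero_add] at hsplit
      exact (mul_eq_zero.mp hsplit).resolve_left (pS_ne_zero T)
    have hce : IsCounterexample I.card n (k - T.card)
        (fun j => S (I.orderIsoOfFin rfl j) \ T) := by
      refine ⟨hI2, ?_, ?_, ?_, ⟨fun j => q (I.orderIsoOfFin rfl j), ?_, ?_, ?_⟩⟩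
      · intro j
        have hj : ((I.orderIsoOfFin rfl j : I) : Fin m) ∈ I := (I.orderIsoOfFin rfl j).2
        have h1 := hcard (I.orderIsoOfFin rfl j)
        have h2 := Finset.card_le_card (hTsub _ hj)
        rw [Finset.card_sdiff_of_subset (hTsub _ hj)]
        omega
      · have hsumI : ∑ j : Fin I.card, (S (I.orderIsoOfFin rfl j) \ T).card
            = ∑ i ∈ I, (S i \ T).card := sum_orderIsoOfFin I (fun i => (S i \ T).card)
        have hZ : ∀ i ∈ I, ((S i \ T).card : ℤ) = ((S i).card : ℤ) - T.card := fun i hi => by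
          rw [Finset.card_sdiff_of_subset (hTsub i hi)]
          have := Finset.card_le_card (hTsub i hi); omega
        have hZsum : (∑ i ∈ I, ((S i \ T).card : ℤ))
            = ((I.card : ℤ) - 1) * ((k : ℤ) - T.card) := by
          rw [Finset.sum_congr rfl hZ, Finset.sum_sub_distrib, Finset.sum_const, nsmul_eq_mul,
            hsumIcard]
          ring
        have e1 : ((I.card - 1 : ℕ) : ℤ) = (I.card : ℤ) - 1 := by omega
        have e2 : ((k - T.card : ℕ) : ℤ) = (k : ℤ) - T.card := by omega
        rw [hsumI]
        have : ((∑ i ∈ I, (S i \ T).card : ℕ) : ℤ)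
            = (((I.card - 1) * (k - T.card) : ℕ) : ℤ) := by
          rw [Nat.cast_sum, hZsum, Nat.cast_mul, e1, e2]
        exact_mod_cast this
      · intro I' hI'
        have hKne : (I'.image (fun j => ((I.orderIsoOfFin rfl j : I) : Fin m))).Nonempty :=
          hI'.image _
        set K := I'.image (fun j => ((I.orderIsoOfFin rfl j : I) : Fin m)) with hK
        have hKI : K ⊆ I := by
          intro i hi
          rw [hK, Finset.mem_image] at hi
          obtain ⟨j, _, rfl⟩ := hi
          exact (I.orderIsoOfFin rfl j).2
        have hTK : T ⊆ K.inf' hKne S :=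
          Finset.le_inf' _ _ (fun i hi => hTsub i (hKI hi))
        have hinj : ∀ x ∈ I', ∀ y ∈ I',
            ((I.orderIsoOfFin rfl x : I) : Fin m) = ((I.orderIsoOfFin rfl y : I) : Fin m)
            → x = y := fun x _ y _ hxy =>
          (I.orderIsoOfFin rfl).injective (Subtype.coe_injective hxy)
        have hinf : I'.inf' hI' (fun j => S (I.orderIsoOfFin rfl j) \ T)
            = K.inf' hKne S \ T := by
          ext x
          rw [mem_inf'_finset, Finset.mem_sdiff, mem_inf'_finset]
          constructor
          · intro hx
            obtain ⟨j0, hj0⟩ := hI'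
            refine ⟨fun i hi => ?_, (Finset.mem_sdiff.mp (hx j0 hj0)).2⟩
            rw [hK, Finset.mem_image] at hi
            obtain ⟨j, hj, rfl⟩ := hi
            exact (Finset.mem_sdiff.mp (hx j hj)).1
          · rintro ⟨hxK, hxT⟩ j hj
            exact Finset.mem_sdiff.mpr
              ⟨hxK _ (Finset.mem_image_of_mem _ hj), hxT⟩
        have hGK := hGM K hKne
        have hcs : ((K.inf' hKne S \ T).card : ℤ) = ((K.inf' hKne S).card : ℤ) - T.card := by
          rw [Finset.card_sdiff_of_subset hTK]
          have := Finset.card_le_card hTK; omega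
        have hsum' : ∑ j ∈ I', (((k - T.card : ℕ) : ℤ)
              - ((S (I.orderIsoOfFin rfl j) \ T).card : ℤ))
            = ∑ i ∈ K, ((k : ℤ) - ((S i).card : ℤ)) := by
          rw [hK, Finset.sum_image hinj]
          refine Finset.sum_congr rfl (fun j hj => ?_)
          have hmem := (I.orderIsoOfFin rfl j).2
          rw [Finset.card_sdiff_of_subset (hTsub _ hmem)]
          have := Finset.card_le_card (hTsub _ hmem)
          omega
        rw [hinf, hsum', hcs]
        omega
      · exact ⟨(I.orderIsoOfFin rfl).symm ⟨i0, hi0I⟩, by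
          simp only [OrderIso.apply_symm_apply]; exact hq0⟩
      · intro j hqj
        simp only at hqj ⊢
        have hj := (I.orderIsoOfFin rfl j).2
        have h1 := hdeg _ hqj
        have h2 := Finset.card_le_card (hTsub _ hj)
        rw [Finset.card_sdiff_of_subset (hTsub _ hj)]
        omega
      · have hsq : ∑ j : Fin I.card, q (I.orderIsoOfFin rfl j) * pS (S (I.orderIsoOfFin rfl j) \ T)
            = ∑ i ∈ I, q i * pS (S i \ T) :=
          sum_orderIsoOfFin I (fun i => q i * pS (S i \ T))
        rw [hsq, ← hhp]
        exact hp0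
    have := hminlt I.card n (k - T.card) _ hce
    rcases this with h | ⟨h, _⟩ <;> omega
  · -- Case B
    push_neg at hA
    obtain ⟨iB, hiBI, hqB⟩ := hA
    have hccompl : Iᶜ.card = m - I.card := by
      rw [Finset.card_compl, Fintype.card_fin]
    have hIcm : I.card ≤ m := by omega
    set S'' : Fin (Iᶜ.card + 1) → Finset (Fin n) :=
      Fin.snoc (fun j => S (Iᶜ.orderIsoOfFin rfl j)) T with hS''def
    set q'' : Fin (Iᶜ.card + 1) → Polynomial (Kf n) :=
      Fin.snoc (fun j => q (Iᶜ.orderIsoOfFin rfl j)) hp with hq''def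
    have hS''c : ∀ j : Fin Iᶜ.card, S'' j.castSucc = S (Iᶜ.orderIsoOfFin rfl j) :=
      fun j => by rw [hS''def]; exact Fin.snoc_castSucc _ _ _
    have hS''l : S'' (Fin.last _) = T := by rw [hS''def]; exact Fin.snoc_last _ _
    have hq''c : ∀ j : Fin Iᶜ.card, q'' j.castSucc = q (Iᶜ.orderIsoOfFin rfl j) :=
      fun j => by rw [hq''def]; exact Fin.snoc_castSucc _ _ _
    have hq''l : q'' (Fin.last _) = hp := by rw [hq''def]; exact Fin.snoc_last _ _
    have hfact : ∀ j : Fin (Iᶜ.card + 1), j ≠ Fin.last _ →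
        ∃ j' : Fin Iᶜ.card, j = j'.castSucc := by
      intro j hj
      exact ⟨j.castPred hj, (Fin.castSucc_castPred j hj).symm⟩
    set g : Fin (Iᶜ.card + 1) → Fin m :=
      fun j => if h : j = Fin.last _ then i1
        else (↑(Iᶜ.orderIsoOfFin rfl (j.castPred h)) : Fin m) with hgdef
    have hg1 : ∀ j' : Fin Iᶜ.card, g j'.castSucc = (Iᶜ.orderIsoOfFin rfl j' : Fin m) := by
      intro j'
      rw [hgdef]
      have hne : j'.castSucc ≠ Fin.last _ := (Fin.castSucc_lt_last j').ne
      simp only [dif_neg hne, Fin.castPred_castSucc]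
    have hg2 : ∀ j, (hj : j ≠ Fin.last _) → (g j ∈ Iᶜ ∧ S'' j = S (g j)) := by
      intro j hj
      obtain ⟨j', rfl⟩ := hfact j hj
      rw [hg1 j']
      exact ⟨(Iᶜ.orderIsoOfFin rfl j').2, hS''c j'⟩
    have hginj : ∀ j₁ j₂ : Fin (Iᶜ.card + 1), j₁ ≠ Fin.last _ → j₂ ≠ Fin.last _ →
        g j₁ = g j₂ → j₁ = j₂ := by
      intro j₁ j₂ h1 h2 hgg
      obtain ⟨a, rfl⟩ := hfact _ h1
      obtain ⟨b, rfl⟩ := hfact _ h2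
      rw [hg1, hg1] at hgg
      exact congrArg Fin.castSucc ((Iᶜ.orderIsoOfFin rfl).injective (Subtype.coe_injective hgg))
    have hce : IsCounterexample (Iᶜ.card + 1) n k S'' := by
      refine ⟨by omega, ?_, ?_, ?_, ⟨q'', ?_, ?_, ?_⟩⟩
      · intro j
        by_cases hj : j = Fin.last Iᶜ.card
        · subst hj; rw [hS''l]; omega
        · obtain ⟨j', rfl⟩ := hfact j hj
          rw [hS''c]; exact hcard _
      · rw [Fin.sum_univ_castSucc]
        have hrw : ∀ j : Fin Iᶜ.card, (S'' j.castSucc).card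
            = (S (Iᶜ.orderIsoOfFin rfl j)).card := fun j => by rw [hS''c]
        rw [Finset.sum_congr rfl (fun j _ => hrw j), hS''l]
        have hBsum : ∑ j : Fin Iᶜ.card, (S ((Iᶜ.orderIsoOfFin rfl) j : Fin m)).card
            = ∑ i ∈ Iᶜ, (S i).card := sum_orderIsoOfFin Iᶜ (fun i => (S i).card)
        rw [hBsum, Nat.add_sub_cancel]
        have hs1 : ∑ i ∈ I, (S i).card + ∑ i ∈ Iᶜ, (S i).card = (m - 1) * k := by
          rw [Finset.sum_add_sum_compl]; exact hsum
        have hz1 : ((∑ i ∈ I, (S i).card : ℕ) : ℤ) + ((∑ i ∈ Iᶜ, (S i).card : ℕ) : ℤ)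
            = (((m - 1) * k : ℕ) : ℤ) := by exact_mod_cast congrArg (Nat.cast : ℕ → ℤ) hs1
        rw [Nat.cast_mul, show ((m - 1 : ℕ) : ℤ) = (m : ℤ) - 1 by omega, Nat.cast_sum,
          hsumIcard, Nat.cast_sum] at hz1
        have hKc : ((Iᶜ.card : ℕ) : ℤ) = (m : ℤ) - I.card := by omega
        have htarget : ((∑ i ∈ Iᶜ, (S i).card + T.card : ℕ) : ℤ)
            = ((Iᶜ.card * k : ℕ) : ℤ) := by
          push_cast
          rw [hKc]
          linear_combination hz1
        exact_mod_cast htarget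
      · intro I' hI'
        by_cases hlast : Fin.last Iᶜ.card ∈ I'
        · have hKne : (I ∪ (I'.erase (Fin.last Iᶜ.card)).image g).Nonempty :=
            ⟨i1, Finset.mem_union_left _ hi1⟩
          have himg : ∀ i ∈ (I'.erase (Fin.last Iᶜ.card)).image g, i ∈ Iᶜ := by
            intro i hi
            obtain ⟨j, hj, rfl⟩ := Finset.mem_image.mp hi
            exact (hg2 j (Finset.ne_of_mem_erase hj)).1
          have hdisj : Disjoint I ((I'.erase (Fin.last Iᶜ.card)).image g) := by
            rw [Finset.disjoint_left]
            intro a haI haK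
            exact (Finset.mem_compl.mp (himg a haK)) haI
          have hinf : I'.inf' hI' S''
              = (I ∪ (I'.erase (Fin.last Iᶜ.card)).image g).inf' hKne S := by
            ext x
            rw [mem_inf'_finset, mem_inf'_finset]
            constructor
            · intro hx i hi
              rcases Finset.mem_union.mp hi with hiI | hiK0
              · have hxT := hx _ hlast
                rw [hS''l, hTdef] at hxT
                exact (mem_inf'_finset _ _ _).mp hxT i hiI
              · obtain ⟨j, hj, rfl⟩ := Finset.mem_image.mp hiK0
                have := hx j (Finset.mem_of_mem_erase hj)
                rwa [(hg2 j (Finset.ne_of_mem_erase hj)).2] at this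
            · intro hx j hj
              by_cases hjl : j = Fin.last Iᶜ.card
              · subst hjl
                rw [hS''l, hTdef]; refine (mem_inf'_finset _ _ _).mpr ?_
                exact fun i hi => hx i (Finset.mem_union_left _ hi)
              · rw [(hg2 j hjl).2]
                exact hx _ (Finset.mem_union_right _
                  (Finset.mem_image_of_mem g (Finset.mem_erase.mpr ⟨hjl, hj⟩)))
          have hsumK : ∑ j ∈ I', ((k : ℤ) - ((S'' j).card : ℤ))
              = ∑ i ∈ I ∪ (I'.erase (Fin.last Iᶜ.card)).image g,
                  ((k : ℤ) - ((S i).card : ℤ)) := by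
            rw [← Finset.sum_erase_add I' _ hlast, hS''l]
            have e3 : ∑ j ∈ I'.erase (Fin.last Iᶜ.card), ((k : ℤ) - ((S'' j).card : ℤ))
                = ∑ j ∈ I'.erase (Fin.last Iᶜ.card), ((k : ℤ) - ((S (g j)).card : ℤ)) :=
              Finset.sum_congr rfl
                (fun j hj => by rw [(hg2 j (Finset.ne_of_mem_erase hj)).2])
            rw [e3, Finset.sum_union hdisj,
              Finset.sum_image (fun a ha b hb hab =>
                hginj a b (Finset.ne_of_mem_erase ha) (Finset.ne_of_mem_erase hb) hab),
              ← heq]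
            ring
          rw [hinf, hsumK]
          exact hGM _ hKne
        · have hKne : (I'.image g).Nonempty := hI'.image _
          have hne : ∀ j ∈ I', j ≠ Fin.last Iᶜ.card := fun j hj hl => hlast (hl ▸ hj)
          have hinf : I'.inf' hI' S'' = (I'.image g).inf' hKne S := by
            ext x
            rw [mem_inf'_finset, mem_inf'_finset]
            constructor
            · intro hx i hi
              obtain ⟨j, hj, rfl⟩ := Finset.mem_image.mp hi
              have := hx j hj
              rwa [(hg2 j (hne j hj)).2] at this
            · intro hx j hj
              rw [(hg2 j (hne j hj)).2]
              exact hx _ (Finset.mem_image_of_mem g hj)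
          have hsumK : ∑ j ∈ I', ((k : ℤ) - ((S'' j).card : ℤ))
              = ∑ i ∈ I'.image g, ((k : ℤ) - ((S i).card : ℤ)) := by
            rw [Finset.sum_image (fun a ha b hb hab =>
              hginj a b (hne a ha) (hne b hb) hab)]
            exact Finset.sum_congr rfl (fun j hj => by rw [(hg2 j (hne j hj)).2])
          rw [hinf, hsumK]
          exact hGM _ hKne
      · refine ⟨Fin.castSucc ((Iᶜ.orderIsoOfFin rfl).symm ⟨iB, Finset.mem_compl.mpr hiBI⟩), ?_⟩
        rw [hq''c]
        simp only [OrderIso.apply_symm_apply]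
        exact hqB
      · intro j hqj
        by_cases hjl : j = Fin.last Iᶜ.card
        · subst hjl
          rw [hq''l] at hqj ⊢
          rw [hS''l]
          omega
        · obtain ⟨j', rfl⟩ := hfact j hjl
          rw [hq''c] at hqj ⊢
          rw [hS''c]
          exact hdeg _ hqj
      · rw [Fin.sum_univ_castSucc]
        have e4 : ∀ j : Fin Iᶜ.card, q'' j.castSucc * pS (S'' j.castSucc)
            = q (Iᶜ.orderIsoOfFin rfl j) * pS (S (Iᶜ.orderIsoOfFin rfl j)) :=
          fun j => by rw [hq''c, hS''c]
        rw [Finset.sum_congr rfl (fun j _ => e4 j), hq''l, hS''l]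
        have hBrel : ∑ j : Fin Iᶜ.card,
              q ((Iᶜ.orderIsoOfFin rfl) j : Fin m) * pS (S ((Iᶜ.orderIsoOfFin rfl) j : Fin m))
            = ∑ i ∈ Iᶜ, q i * pS (S i) := sum_orderIsoOfFin Iᶜ (fun i => q i * pS (S i))
        rw [hBrel, mul_comm hp (pS T)]
        exact hsplit
    have := hminlt (Iᶜ.card + 1) n k S'' hce
    rcases this with h | ⟨h, _⟩ <;> omega
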